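/- arXiv:2511.08594 — 4 statements merged into one kernel-verified Lean document; each statement's English description precedes it below -/
import Mathlib

section
/- In the two-outcome setting with population preference probability p ∈ (0,1), Bradley-Terry-optimal reward (σ(r(y)−r(y')) = p), and reference policy q with q(y), q(y') > 0, the SPL-optimal policy π(z) ∝ q(z)^{β/α} exp(r(z)/α) satisfies π(y)/π(y') = (q(y)/q(y'))^{β/α} · (p/(1−p))^{1/α}. -/
open Real

theorem stmt_4 (p α β qy qy' ry ry' : ℝ) (hp : 0 < p) (hp1 : p < 1)
    (hα : 0 < α) (hβ : 0 ≤ β) (hqy : 0 < qy) (hqy' : 0 < qy')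
    (hr : 1 / (1 + Real.exp (-(ry - ry'))) = p) :
    let Z : ℝ := qy ^ (β / α) * Real.exp (ry / α) + qy' ^ (β / α) * Real.exp (ry' / α)
    (qy ^ (β / α) * Real.exp (ry / α) / Z) / (qy' ^ (β / α) * Real.exp (ry' / α) / Z)
      = (qy / qy') ^ (β / α) * (p / (1 - p)) ^ (1 / α) := by
  intro Z
  have hp1' : 0 < 1 - p := by linarith
  have hd : (0:ℝ) < 1 + Real.exp (-(ry - ry')) := by positivity
  have ht : Real.exp (-(ry - ry')) = (1 - p) / p := by
    field_simp at hr ⊢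
    nlinarith [hr]
  have hexp : Real.exp (ry - ry') = p / (1 - p) := by
    have : Real.exp (ry - ry') * Real.exp (-(ry - ry')) = 1 := by
      rw [← Real.exp_add]; simp
    rw [ht] at this
    field_simp at this ⊢
    nlinarith [this]
  have hZ : 0 < Z := by positivity
  have key : (p / (1 - p)) ^ (1 / α) = Real.exp ((ry - ry') / α) := by
    rw [← hexp, Real.rpow_def_of_pos (Real.exp_pos _), Real.log_exp]
    ring_nf
  have hsub : Real.exp ((ry - ry') / α) = Real.exp (ry / α) / Real.exp (ry' / α) := by
    rw [← Real.exp_sub]; ring_nf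
  rw [key, hsub, Real.div_rpow hqy.le hqy'.le]
  have h1 : qy' ^ (β / α) * Real.exp (ry' / α) ≠ 0 := by positivity
  field_simp
end

section
/- Let p ∈ (0,1) be a population preference and β ∈ (0,1). With uniform reference policy, the KL-regularized optimal two-outcome policy π(y) = p^{1/β}/(p^{1/β} + (1−p)^{1/β}) satisfies: if p > 1/2 then π(y) > p, and π(y) → 1 as β → 0⁺. -/
open Real Filter

theorem stmt_12 (p : ℝ) (hp : 0 < p) (hp1 : p < 1) :
    let piOf : ℝ → ℝ := fun β => p ^ (1 / β) / (p ^ (1 / β) + (1 - p) ^ (1 / β))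
    (1 / 2 < p → ∀ β : ℝ, 0 < β → β < 1 → p < piOf β) ∧
    (1 / 2 < p → Tendsto piOf (nhdsWithin 0 (Set.Ioi 0)) (nhds 1)) := by
  intro piOf
  have hq : 0 < 1 - p := by linarith
  constructor
  · intro hp2 β hβ hβ1
    have ha : 1 < 1 / β := by rw [lt_div_iff₀ hβ]; linarith
    set a := 1 / β with ha_def
    have hpa : (0:ℝ) < p ^ a := rpow_pos_of_pos hp a
    have hqa : (0:ℝ) < (1 - p) ^ a := rpow_pos_of_pos hq a
    show p < p ^ a / (p ^ a + (1 - p) ^ a)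
    rw [lt_div_iff₀ (by positivity)]
    have key : (1 - p) ^ (a - 1) < p ^ (a - 1) :=
      Real.rpow_lt_rpow (le_of_lt hq) (by linarith) (by linarith)
    have hpa1 : p ^ a = p ^ (a - 1) * p := by
      rw [Real.rpow_sub hp, Real.rpow_one]; field_simp
    have hqa1 : (1 - p) ^ a = (1 - p) ^ (a - 1) * (1 - p) := by
      rw [Real.rpow_sub hq, Real.rpow_one]; field_simp
    have hq1 : (0:ℝ) < (1 - p) ^ (a - 1) := rpow_pos_of_pos hq _
    nlinarith [mul_pos hp hq, mul_pos hq1 (mul_pos hp hq)]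
  · intro hp2
    have hr : (1 - p) / p < 1 := by rw [div_lt_one hp]; linarith
    have h0 : Tendsto (fun β : ℝ => ((1 - p) / p) ^ (1 / β)) (nhdsWithin 0 (Set.Ioi 0)) (nhds 0) := by
      have h1 : Tendsto (fun β : ℝ => 1 / β) (nhdsWithin 0 (Set.Ioi 0)) atTop := by
        simpa [one_div] using tendsto_inv_nhdsGT_zero
      exact (tendsto_rpow_atTop_of_base_lt_one _ (by nlinarith [div_nonneg hq.le hp.le]) hr).comp h1
    have heq : ∀ β : ℝ, piOf β = 1 / (1 + ((1 - p) / p) ^ (1 / β)) := by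
      intro β
      have hx : (0:ℝ) < p ^ (1 / β) := rpow_pos_of_pos hp _
      rw [Real.div_rpow (le_of_lt hq) (le_of_lt hp)]
      show p ^ (1/β) / (p ^ (1/β) + (1 - p) ^ (1/β)) = _
      field_simp
    have : Tendsto (fun β : ℝ => 1 / (1 + ((1 - p) / p) ^ (1 / β)))
        (nhdsWithin 0 (Set.Ioi 0)) (nhds 1) := by
      have := (tendsto_const_nhds : Tendsto (fun _ : ℝ => (1:ℝ)) (nhdsWithin 0 (Set.Ioi 0)) (nhds 1)).div (h0.const_add 1) (by norm_num)
      simpa [Pi.div_def] using this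
    exact this.congr (fun β => (heq β).symm)
end

section
/- Let r ∈ ℝⁿ, q a positive probability distribution, and α, β > 0. Define for each distribution π the reparameterized reward r̂_π(i) = α log π(i) − β log q(i) + C for any constant C. If π*(i) = q(i)^{β/α} exp(r(i)/α)/Z is the SPL-optimal policy for reward r, then r̂_{π*}(i) − r̂_{π*}(j) = r(i) − r(j) for all i, j. -/
open Real Finset

theorem stmt_14 (n : ℕ) (α β : ℝ) (hα : 0 < α) (hβ : 0 < β) (r q : Fin n → ℝ)
    (hq : ∀ i, 0 < q i) (hq1 : ∑ i, q i = 1) (C : ℝ) :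
    let Z : ℝ := ∑ j, q j ^ (β / α) * Real.exp (r j / α)
    let Pstar : Fin n → ℝ := fun i => q i ^ (β / α) * Real.exp (r i / α) / Z
    let rhat : Fin n → ℝ := fun i => α * Real.log (Pstar i) - β * Real.log (q i) + C
    ∀ i j, rhat i - rhat j = r i - r j := by
  intro Z Pstar rhat i j
  have hZ : 0 < Z := by
    apply Finset.sum_pos
    · intro k _
      exact mul_pos (Real.rpow_pos_of_pos (hq k) _) (Real.exp_pos _)
    · exact ⟨i, Finset.mem_univ i⟩
  have hlog : ∀ k, Real.log (Pstar k) =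
      (β / α) * Real.log (q k) + r k / α - Real.log Z := by
    intro k
    show Real.log (q k ^ (β / α) * Real.exp (r k / α) / Z) = _
    rw [Real.log_div (mul_pos (Real.rpow_pos_of_pos (hq k) _) (Real.exp_pos _)).ne' hZ.ne',
      Real.log_mul (Real.rpow_pos_of_pos (hq k) _).ne' (Real.exp_ne_zero _),
      Real.log_rpow (hq k), Real.log_exp]
  show α * Real.log (Pstar i) - β * Real.log (q i) + C -
      (α * Real.log (Pstar j) - β * Real.log (q j) + C) = r i - r j
  rw [hlog i, hlog j]
  field_simp
  ring
end

section
/- Token-level temperature scaling does not in general preserve sequence-probability ordering: there exists a two-token autoregressive distribution π over sequences and a temperature t > 1 such that some sequence y has π(y) > π(y') but the token-level temperature-scaled distribution π_t (scaling and renormalizing each conditional token distribution by exponent 1/t) satisfies π_t(y) < π_t(y'). -/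
open Real Finset

lemma sqrt_helper (a b x : ℝ) (_hb : 0 ≤ b) (_hx : 0 ≤ x) (h : x = a^2 / b) (ha : 0 ≤ a) :
    x ^ ((1:ℝ)/2) = a / Real.sqrt b := by
  rw [← Real.sqrt_eq_rpow, h, Real.sqrt_div (by positivity), Real.sqrt_sq ha]

theorem stmt_17 :
    ∃ (P1 : Fin 2 → ℝ) (P2 : Fin 2 → Fin 2 → ℝ) (t : ℝ),
      (∀ i, 0 < P1 i) ∧ (∑ i, P1 i = 1) ∧
      (∀ i j, 0 < P2 i j) ∧ (∀ i, ∑ j, P2 i j = 1) ∧ 1 < t ∧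
      ∃ y y' : Fin 2 × Fin 2,
        P1 y.1 * P2 y.1 y.2 > P1 y'.1 * P2 y'.1 y'.2 ∧
        (P1 y.1 ^ (1 / t) / ∑ i, P1 i ^ (1 / t)) *
            (P2 y.1 y.2 ^ (1 / t) / ∑ j, P2 y.1 j ^ (1 / t))
          < (P1 y'.1 ^ (1 / t) / ∑ i, P1 i ^ (1 / t)) *
            (P2 y'.1 y'.2 ^ (1 / t) / ∑ j, P2 y'.1 j ^ (1 / t)) := by
  refine ⟨![9/13, 4/13], ![![1/2,1/2], ![16/17,1/17]], 2,
    ?_, ?_, ?_, ?_, by norm_num, (0,0), (1,0), ?_, ?_⟩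
  · intro i; fin_cases i <;> norm_num
  · simp [Fin.sum_univ_two]; norm_num
  · intro i j; fin_cases i <;> fin_cases j <;> norm_num
  · intro i; fin_cases i <;> simp [Fin.sum_univ_two] <;> norm_num
  · norm_num
  · simp only [Fin.sum_univ_two, Matrix.cons_val_zero, Matrix.cons_val_one, Matrix.head_cons]
    rw [sqrt_helper 3 13 _ (by norm_num) (by norm_num) (by norm_num) (by norm_num),
        sqrt_helper 2 13 _ (by norm_num) (by norm_num) (by norm_num) (by norm_num),
        sqrt_helper 1 2 _ (by norm_num) (by norm_num) (by norm_num) (by norm_num),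
        sqrt_helper 4 17 _ (by norm_num) (by norm_num) (by norm_num) (by norm_num),
        sqrt_helper 1 17 _ (by norm_num) (by norm_num) (by norm_num) (by norm_num)]
    have h13 : Real.sqrt 13 > 0 := Real.sqrt_pos.mpr (by norm_num)
    have h2 : Real.sqrt 2 > 0 := Real.sqrt_pos.mpr (by norm_num)
    have h17 : Real.sqrt 17 > 0 := Real.sqrt_pos.mpr (by norm_num)
    rw [← add_div, ← add_div, ← add_div]
    have key : ∀ a b c : ℝ, c ≠ 0 → a / c / (b / c) = a / b := fun a b c hc => by
      field_simp
    rw [key _ _ _ (ne_of_gt h13), key _ _ _ (ne_of_gt h13),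
        key _ _ _ (ne_of_gt h2), key _ _ _ (ne_of_gt h17)]
    norm_num
end
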